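/- For every boundary point x of a compact ρ,h-cone-convex set S and every radius r < h, there exists a constant k < 1 depending only on ρ and h (in fact one may take k = 1 − μ(C ∩ B(0,1))/μ(B(0,1)) where C is any cone of opening angle ρ) such that μ(S ∩ B(x,r)) ≤ k·μ(B(x,r)). -/

import Mathlib

open MeasureTheory Metric Set Filter
open Pointwise ENNReal

noncomputable section

/-- The open finite cone with vertex `x`, axis `ξ`, opening angle `ρ` and height `h`. -/
def fcone (d : ℕ) (ρ h : ℝ) (x ξ : EuclideanSpace ℝ (Fin d)) :
    Set (EuclideanSpace ℝ (Fin d)) :=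
  {z | z ≠ x ∧ (inner ℝ ξ (‖z - x‖⁻¹ • (z - x)) : ℝ) > Real.cos (ρ / 2)} ∩ Metric.ball x h

/-- `S` is `ρ,h`-cone-convex. -/
def ConeConvex (d : ℕ) (ρ h : ℝ) (S : Set (EuclideanSpace ℝ (Fin d))) : Prop :=
  ∀ x ∈ frontier S, ∃ ξ : EuclideanSpace ℝ (Fin d), ‖ξ‖ = 1 ∧ fcone d ρ h x ξ ⊆ Sᶜ

/-- The `ρ,h`-cone-convex hull by complement. -/
def cccHull (d : ℕ) (ρ h : ℝ) (S : Set (EuclideanSpace ℝ (Fin d))) :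
    Set (EuclideanSpace ℝ (Fin d)) :=
  ⋂₀ {A | ∃ y ξ : EuclideanSpace ℝ (Fin d),
      ‖ξ‖ = 1 ∧ fcone d ρ h y ξ ∩ S = ∅ ∧ A = (fcone d ρ h y ξ)ᶜ}

/-- The `ρ,h`-cone-convex hull: intersection of all compact `ρ,h`-cone-convex supersets. -/
def ccHull (d : ℕ) (ρ h : ℝ) (S : Set (EuclideanSpace ℝ (Fin d))) :
    Set (EuclideanSpace ℝ (Fin d)) :=
  ⋂₀ {B | S ⊆ B ∧ IsCompact B ∧ B.Nonempty ∧ ConeConvex d ρ h B}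

lemma fcone_isOpen (d : ℕ) (ρ h : ℝ) (x ξ : EuclideanSpace ℝ (Fin d)) :
    IsOpen (fcone d ρ h x ξ) := by
  refine IsOpen.inter ?_ isOpen_ball
  have h1 : IsOpen {z : EuclideanSpace ℝ (Fin d) | z ≠ x} := isOpen_ne
  have h2 : ContinuousOn
      (fun z : EuclideanSpace ℝ (Fin d) => (inner ℝ ξ (‖z - x‖⁻¹ • (z - x)) : ℝ))
      {z | z ≠ x} := by
    apply ContinuousOn.inner continuousOn_const
    apply ContinuousOn.fun_smul
    · exact ((continuous_id.sub continuous_const).norm.continuousOn).inv₀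
        (fun z hz => by simpa [sub_eq_zero] using hz)
    · exact (continuous_id.sub continuous_const).continuousOn
  have : {z : EuclideanSpace ℝ (Fin d) |
      z ≠ x ∧ (inner ℝ ξ (‖z - x‖⁻¹ • (z - x)) : ℝ) > Real.cos (ρ / 2)} =
      {z | z ≠ x} ∩ (fun z : EuclideanSpace ℝ (Fin d) =>
        (inner ℝ ξ (‖z - x‖⁻¹ • (z - x)) : ℝ)) ⁻¹' (Set.Ioi (Real.cos (ρ / 2))) := by
    ext z; simp [and_comm]
  rw [this]
  exact h2.isOpen_inter_preimage h1 isOpen_Ioi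

lemma fcone_subset_ball (d : ℕ) (ρ h : ℝ) (x ξ : EuclideanSpace ℝ (Fin d)) :
    fcone d ρ h x ξ ⊆ Metric.ball x h := inter_subset_right

lemma fcone_eq_vadd_smul (d : ℕ) (ρ : ℝ) {r : ℝ} (hr : 0 < r)
    (x ξ : EuclideanSpace ℝ (Fin d)) :
    fcone d ρ r x ξ = x +ᵥ r • fcone d ρ 1 0 ξ := by
  ext z
  rw [Set.mem_vadd_set_iff_neg_vadd_mem, Set.mem_smul_set_iff_inv_smul_mem₀ hr.ne']
  have hvadd : -x +ᵥ z = z - x := by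
    simp [vadd_eq_add]; abel
  rw [hvadd]
  set w : EuclideanSpace ℝ (Fin d) := r⁻¹ • (z - x) with hw
  have hzw : z - x = r • w := by
    rw [hw, smul_smul, mul_inv_cancel₀ hr.ne', one_smul]
  by_cases hz : z = x
  · have hw0 : w = 0 := by simp [hw, hz]
    simp [fcone, hz, hw0]
  · have hw0 : w ≠ 0 := by
      intro h0
      apply hz
      have := hzw
      rw [h0, smul_zero, sub_eq_zero] at this
      exact this
    have hnorm : ‖z - x‖ = r * ‖w‖ := by
      rw [hzw, norm_smul, Real.norm_eq_abs, abs_of_pos hr]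
    have hdir : (r * ‖w‖)⁻¹ • (z - x) = ‖w‖⁻¹ • w := by
      rw [hzw, smul_smul, mul_inv]
      congr 1
      rw [mul_comm r⁻¹, mul_assoc, inv_mul_cancel₀ hr.ne', mul_one]
    simp only [fcone, mem_inter_iff, mem_setOf_eq, mem_ball, dist_eq_norm, sub_zero, hz, hw0,
      ne_eq, not_false_eq_true, true_and, hdir, hnorm]
    constructor
    · rintro ⟨h1, h2⟩
      exact ⟨h1, by nlinarith [norm_nonneg w]⟩
    · rintro ⟨h1, h2⟩
      exact ⟨h1, by nlinarith [norm_nonneg w]⟩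

lemma fcone_preimage (d : ℕ) (ρ h : ℝ)
    (f : EuclideanSpace ℝ (Fin d) ≃ₗᵢ[ℝ] EuclideanSpace ℝ (Fin d))
    (ξ : EuclideanSpace ℝ (Fin d)) :
    f ⁻¹' fcone d ρ h 0 (f ξ) = fcone d ρ h 0 ξ := by
  ext z
  have hz0 : f z = 0 ↔ z = 0 := by
    constructor
    · intro h0; have := f.injective (a₁ := z) (a₂ := 0); simp [h0] at this ⊢; exact this
    · intro h0; simp [h0]
  have hnorm : ‖f z‖ = ‖z‖ := f.norm_map z
  have hinner : (inner ℝ (f ξ) (‖z‖⁻¹ • f z) : ℝ) = inner ℝ ξ (‖z‖⁻¹ • z) := by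
    rw [← f.map_smul, f.inner_map_map]
  simp only [fcone, mem_preimage, mem_inter_iff, mem_setOf_eq, mem_ball, dist_eq_norm, sub_zero,
    hnorm, hinner, ne_eq, hz0]

lemma volume_fcone_eq (d : ℕ) (ρ : ℝ) {ξ₁ ξ₂ : EuclideanSpace ℝ (Fin d)}
    (h1 : ‖ξ₁‖ = 1) (h2 : ‖ξ₂‖ = 1) :
    volume (fcone d ρ 1 0 ξ₁) = volume (fcone d ρ 1 0 ξ₂) := by
  set f := Submodule.reflection (ℝ ∙ (ξ₁ - ξ₂))ᗮ with hf
  have hfξ : f ξ₁ = ξ₂ := Submodule.reflection_sub (h1.trans h2.symm)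
  have := fcone_preimage d ρ 1 f ξ₁
  rw [hfξ] at this
  rw [← this]
  exact f.measurePreserving.measure_preimage
    (fcone_isOpen d ρ 1 0 ξ₂).measurableSet.nullMeasurableSet

lemma volume_fcone_pos (d : ℕ) {ρ : ℝ} (hρ0 : 0 < ρ) (hρπ : ρ ≤ Real.pi)
    {ξ : EuclideanSpace ℝ (Fin d)} (hξ : ‖ξ‖ = 1) :
    0 < volume (fcone d ρ 1 0 ξ) := by
  have hξ0 : ξ ≠ 0 := by intro h0; rw [h0, norm_zero] at hξ; norm_num at hξ
  refine (fcone_isOpen d ρ 1 0 ξ).measure_pos volume ⟨(2 : ℝ)⁻¹ • ξ, ?_, ?_⟩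
  · constructor
    · intro h0
      apply hξ0
      have : (2 : ℝ) • (2 : ℝ)⁻¹ • ξ = (2 : ℝ) • (0 : EuclideanSpace ℝ (Fin d)) := by rw [h0]
      simpa [smul_smul] using this
    · have hnorm : ‖(2 : ℝ)⁻¹ • ξ - 0‖ = 2⁻¹ := by
        rw [sub_zero, norm_smul, hξ]; norm_num
      rw [hnorm, sub_zero]
      have : ((2 : ℝ)⁻¹)⁻¹ • (2 : ℝ)⁻¹ • ξ = ξ := by
        rw [smul_smul]; norm_num
      rw [this]
      have hii : (inner ℝ ξ ξ : ℝ) = 1 := by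
        rw [real_inner_self_eq_norm_sq, hξ]; norm_num
      rw [hii]
      have : Real.cos (ρ / 2) < Real.cos 0 :=
        Real.cos_lt_cos_of_nonneg_of_le_pi le_rfl (by linarith [Real.pi_pos]) (by linarith)
      simpa using this
  · rw [mem_ball, dist_eq_norm, sub_zero, norm_smul, hξ]
    norm_num
theorem stmt_1 {d : ℕ} {ρ h : ℝ} (hρ : ρ ∈ Set.Ioc 0 Real.pi) (hh : 0 < h)
    (S : Set (EuclideanSpace ℝ (Fin d))) (hS : IsCompact S)
    (hcc : ConeConvex d ρ h S) :
    ∃ k : ℝ, 0 ≤ k ∧ k < 1 ∧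
      (∀ ξ : EuclideanSpace ℝ (Fin d), ‖ξ‖ = 1 →
        k = 1 - (volume (fcone d ρ 1 0 ξ ∩ Metric.ball 0 1)).toReal /
              (volume (Metric.ball (0 : EuclideanSpace ℝ (Fin d)) 1)).toReal) ∧
      ∀ x ∈ frontier S, ∀ r : ℝ, 0 < r → r < h →
        volume (S ∩ Metric.ball x r) ≤ ENNReal.ofReal k * volume (Metric.ball x r) := by
  by_cases hex : ∃ ξ : EuclideanSpace ℝ (Fin d), ‖ξ‖ = 1
  · obtain ⟨ξ₀, hξ₀⟩ := hex
    have hξ₀0 : ξ₀ ≠ 0 := by intro h0; rw [h0, norm_zero] at hξ₀; norm_num at hξ₀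
    haveI : Nontrivial (EuclideanSpace ℝ (Fin d)) := nontrivial_of_ne ξ₀ 0 hξ₀0
    set c : ℝ≥0∞ := volume (fcone d ρ 1 0 ξ₀) with hc
    set b : ℝ≥0∞ := volume (Metric.ball (0 : EuclideanSpace ℝ (Fin d)) 1) with hb
    have hb0 : 0 < b := measure_ball_pos _ _ one_pos
    have hbt : b ≠ ⊤ := measure_ball_lt_top.ne
    have hc0 : 0 < c := volume_fcone_pos d hρ.1 hρ.2 hξ₀
    have hcb : c ≤ b := measure_mono (fcone_subset_ball d ρ 1 0 ξ₀)
    have hct : c ≠ ⊤ := (lt_of_le_of_lt hcb hbt.lt_top).ne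
    have hbr0 : 0 < b.toReal := ENNReal.toReal_pos hb0.ne' hbt
    have hcr0 : 0 < c.toReal := ENNReal.toReal_pos hc0.ne' hct
    have hcbr : c.toReal ≤ b.toReal := ENNReal.toReal_mono hbt hcb
    refine ⟨1 - c.toReal / b.toReal, ?_, ?_, ?_, ?_⟩
    · have : c.toReal / b.toReal ≤ 1 := (div_le_one hbr0).2 hcbr
      linarith
    · have : 0 < c.toReal / b.toReal := div_pos hcr0 hbr0
      linarith
    · intro ξ hξ
      have hsub : fcone d ρ 1 0 ξ ∩ Metric.ball 0 1 = fcone d ρ 1 0 ξ :=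
        inter_eq_self_of_subset_left (fcone_subset_ball d ρ 1 0 ξ)
      rw [hsub, volume_fcone_eq d ρ hξ hξ₀]
    · intro x hx r hr hrh
      obtain ⟨ξ, hξ, hsub⟩ := hcc x hx
      have hsub2 : fcone d ρ r x ξ ⊆ Sᶜ := by
        refine subset_trans (inter_subset_inter_right _ (ball_subset_ball hrh.le)) hsub
      have hcball : fcone d ρ r x ξ ⊆ Metric.ball x r := fcone_subset_ball d ρ r x ξ
      have hkey : S ∩ Metric.ball x r ⊆ Metric.ball x r \ fcone d ρ r x ξ := by
        rintro z ⟨hzS, hzB⟩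
        exact ⟨hzB, fun hzc => hsub2 hzc hzS⟩
      have hvc : volume (fcone d ρ r x ξ) = ENNReal.ofReal (r ^ d) * c := by
        rw [fcone_eq_vadd_smul d ρ hr x ξ, measure_vadd,
          MeasureTheory.Measure.addHaar_smul_of_nonneg volume hr.le,
          finrank_euclideanSpace_fin, volume_fcone_eq d ρ hξ hξ₀]
      have hvb : volume (Metric.ball x r) = ENNReal.ofReal (r ^ d) * b := by
        rw [MeasureTheory.Measure.addHaar_ball volume x hr.le, finrank_euclideanSpace_fin]
      have hvct : volume (fcone d ρ r x ξ) ≠ ⊤ :=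
        ((measure_mono hcball).trans_lt measure_ball_lt_top).ne
      have hkb : ENNReal.ofReal (1 - c.toReal / b.toReal) * b = b - c := by
        have h1 : (1 - c.toReal / b.toReal) * b.toReal = b.toReal - c.toReal := by
          field_simp
        have hk0 : 0 ≤ 1 - c.toReal / b.toReal := by
          have := (div_le_one hbr0).2 hcbr; linarith
        calc ENNReal.ofReal (1 - c.toReal / b.toReal) * b
            = ENNReal.ofReal (1 - c.toReal / b.toReal) * ENNReal.ofReal b.toReal := by
              rw [ENNReal.ofReal_toReal hbt]
          _ = ENNReal.ofReal ((1 - c.toReal / b.toReal) * b.toReal) :=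
              (ENNReal.ofReal_mul hk0).symm
          _ = ENNReal.ofReal (b.toReal - c.toReal) := by rw [h1]
          _ = ENNReal.ofReal b.toReal - ENNReal.ofReal c.toReal :=
              ENNReal.ofReal_sub _ c.toReal_nonneg
          _ = b - c := by rw [ENNReal.ofReal_toReal hbt, ENNReal.ofReal_toReal hct]
      calc volume (S ∩ Metric.ball x r)
          ≤ volume (Metric.ball x r \ fcone d ρ r x ξ) := measure_mono hkey
        _ = volume (Metric.ball x r) - volume (fcone d ρ r x ξ) :=
            measure_diff hcball
              (fcone_isOpen d ρ r x ξ).measurableSet.nullMeasurableSet hvct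
        _ = ENNReal.ofReal (r ^ d) * b - ENNReal.ofReal (r ^ d) * c := by rw [hvb, hvc]
        _ ≤ ENNReal.ofReal (r ^ d) * (b - c) := by
            rw [tsub_le_iff_right, ← mul_add, tsub_add_cancel_of_le hcb]
        _ = ENNReal.ofReal (1 - c.toReal / b.toReal) * volume (Metric.ball x r) := by
            rw [hvb, ← hkb]; ring
  · push_neg at hex
    haveI hsub : Subsingleton (EuclideanSpace ℝ (Fin d)) := by
      by_contra hns
      rw [not_subsingleton_iff_nontrivial] at hns
      obtain ⟨v, hv⟩ := exists_ne (0 : EuclideanSpace ℝ (Fin d))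
      have hv' : (0:ℝ) < ‖v‖ := norm_pos_iff.2 hv
      have : ‖(‖v‖⁻¹ • v : EuclideanSpace ℝ (Fin d))‖ = 1 := by
        rw [norm_smul, Real.norm_eq_abs, abs_of_pos (inv_pos.2 hv'), inv_mul_cancel₀ hv'.ne']
      exact hex _ this
    refine ⟨0, le_refl 0, zero_lt_one, fun ξ hξ => absurd hξ (by simpa using hex ξ), ?_⟩
    intro x hx r hr hrh
    exfalso
    rcases S.eq_empty_or_nonempty with hSe | hSn
    · rw [hSe, frontier_empty] at hx; exact hx
    · rw [hSn.eq_univ, frontier_univ] at hx; exact hx
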